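/- In the FABA analysis, at any iteration i with remaining set U^{(i)}, if a regular worker attains the maximum distance to the current average ȳ_{U^{(i)}} (i.e., is removed), then ‖ȳ_{R^{(i)}} − ȳ_{P^{(i)}}‖ ≤ (1/(1−2u_i)) max_{w∈R} ‖y_w − ȳ_{R^{(i)}}‖, where R^{(i)} and P^{(i)} are the regular and poisoned workers remaining in U^{(i)}, u_i = |P^{(i)}|/|U^{(i)}| < 1/2, and ȳ_{R^{(i)}}, ȳ_{P^{(i)}} are their averages. -/

import Mathlib

private lemma div_smul_aux {E : Type*} [AddCommGroup E] [Module ℝ E]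
    (c d : ℝ) (v : E) : (c / d) • v = d⁻¹ • c • v := by
  rw [smul_smul, div_eq_inv_mul]


/-- in the FABA analysis, with remaining set `U`, remaining regular workers
`U ∩ Reg`, remaining poisoned workers `U \ Reg`, and remaining poisoned fraction
`u = |U \ Reg| / |U| < 1/2`, if a regular worker `wstar ∈ U ∩ Reg` attains the maximum
distance to the current average `ȳ_U`, then
`‖ȳ_{U∩Reg} − ȳ_{U\Reg}‖ ≤ (1/(1−2u)) · max_{w ∈ Reg} ‖y w − ȳ_{U∩Reg}‖`. -/
theorem stmt_13 (W D : ℕ) (y : Fin W → EuclideanSpace ℝ (Fin D))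
    (Reg U : Finset (Fin W)) (hReg : Reg.Nonempty)
    (hRne : (U ∩ Reg).Nonempty) (hPne : (U \ Reg).Nonempty)
    (hu : ((U \ Reg).card : ℝ) / U.card < 1 / 2)
    (wstar : Fin W) (hws : wstar ∈ U ∩ Reg)
    (hmax : ∀ v ∈ U, ‖y v - (U.card : ℝ)⁻¹ • ∑ u ∈ U, y u‖ ≤
      ‖y wstar - (U.card : ℝ)⁻¹ • ∑ u ∈ U, y u‖) :
    ‖((U ∩ Reg).card : ℝ)⁻¹ • ∑ w ∈ U ∩ Reg, y w -
        ((U \ Reg).card : ℝ)⁻¹ • ∑ w ∈ U \ Reg, y w‖ ≤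
      (1 - 2 * (((U \ Reg).card : ℝ) / U.card))⁻¹ *
        Reg.sup' hReg (fun w => ‖y w - ((U ∩ Reg).card : ℝ)⁻¹ • ∑ v ∈ U ∩ Reg, y v‖) := by
  classical
  obtain ⟨w0, hw0⟩ := hRne
  have hUne : U.Nonempty := ⟨w0, (Finset.mem_inter.mp hw0).1⟩
  set r : ℝ := ((U ∩ Reg).card : ℝ) with hrdef
  set p : ℝ := ((U \ Reg).card : ℝ) with hpdef
  set n : ℝ := (U.card : ℝ) with hndef
  have hr0 : 0 < r := by rw [hrdef]; exact_mod_cast Finset.card_pos.mpr ⟨w0, hw0⟩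
  have hp0 : 0 < p := by rw [hpdef]; exact_mod_cast Finset.card_pos.mpr hPne
  have hn0 : 0 < n := by rw [hndef]; exact_mod_cast Finset.card_pos.mpr hUne
  have hrp : r + p = n := by
    have := Finset.card_inter_add_card_sdiff U Reg
    rw [hrdef, hpdef, hndef]
    exact_mod_cast this
  have hsum : (∑ w ∈ U ∩ Reg, y w) + ∑ w ∈ U \ Reg, y w = ∑ w ∈ U, y w :=
    Finset.sum_inter_add_sum_sdiff U Reg y
  set a := r⁻¹ • ∑ w ∈ U ∩ Reg, y w with hadef
  set b := p⁻¹ • ∑ w ∈ U \ Reg, y w with hbdef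
  set m := n⁻¹ • ∑ u ∈ U, y u with hmdef
  have hSa : (∑ w ∈ U ∩ Reg, y w) = r • a := by
    rw [hadef, smul_smul, mul_inv_cancel₀ hr0.ne', one_smul]
  have hSb : (∑ w ∈ U \ Reg, y w) = p • b := by
    rw [hbdef, smul_smul, mul_inv_cancel₀ hp0.ne', one_smul]
  have hm : m = (r / n) • a + (p / n) • b := by
    rw [hmdef, ← hsum, hSa, hSb, smul_add, div_smul_aux, div_smul_aux]
  have hone : r / n + p / n = 1 := by
    field_simp
    linarith
  have hbm : b - m = (r / n) • (b - a) := by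
    rw [hm, smul_sub]
    nth_rewrite 1 [show b = (r / n + p / n) • b from by rw [hone, one_smul]]
    rw [add_smul]
    abel
  have ham : a - m = (p / n) • (a - b) := by
    rw [hm, smul_sub]
    nth_rewrite 1 [show a = (r / n + p / n) • a from by rw [hone, one_smul]]
    rw [add_smul]
    abel
  have hrn0 : (0:ℝ) ≤ r / n := div_nonneg hr0.le hn0.le
  have hpn0 : (0:ℝ) ≤ p / n := div_nonneg hp0.le hn0.le
  have hnbm : ‖b - m‖ = (r / n) * ‖a - b‖ := by
    rw [hbm, norm_smul, Real.norm_of_nonneg hrn0, norm_sub_rev]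
  have hnam : ‖a - m‖ = (p / n) * ‖a - b‖ := by
    rw [ham, norm_smul, Real.norm_of_nonneg hpn0]
  -- ‖b - m‖ ≤ max over poisoned ≤ ‖y wstar - m‖
  have key : ‖b - m‖ ≤ ‖y wstar - m‖ := by
    obtain ⟨w', hw', hmax'⟩ := (U \ Reg).exists_max_image (fun w => ‖y w - m‖) hPne
    have hsc : ∑ w ∈ U \ Reg, (y w - m) = (∑ w ∈ U \ Reg, y w) - p • m := by
      rw [Finset.sum_sub_distrib, Finset.sum_const, hpdef, Nat.cast_smul_eq_nsmul]
    have hdecomp : b - m = p⁻¹ • ∑ w ∈ U \ Reg, (y w - m) := by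
      rw [hsc, smul_sub, smul_smul, inv_mul_cancel₀ hp0.ne', one_smul, ← hbdef]
    have h1 : ‖b - m‖ ≤ ‖y w' - m‖ := by
      rw [hdecomp, norm_smul, Real.norm_of_nonneg (inv_nonneg.mpr hp0.le : (0:ℝ) ≤ p⁻¹)]
      have hle : ‖∑ w ∈ U \ Reg, (y w - m)‖ ≤ p * ‖y w' - m‖ := by
        calc ‖∑ w ∈ U \ Reg, (y w - m)‖ ≤ ∑ w ∈ U \ Reg, ‖y w - m‖ :=
              norm_sum_le _ _
          _ ≤ ∑ _w ∈ U \ Reg, ‖y w' - m‖ :=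
              Finset.sum_le_sum fun w hw => hmax' w hw
          _ = p * ‖y w' - m‖ := by rw [Finset.sum_const, hpdef]; ring
      calc p⁻¹ * ‖∑ w ∈ U \ Reg, (y w - m)‖ ≤ p⁻¹ * (p * ‖y w' - m‖) := by
            exact mul_le_mul_of_nonneg_left hle (inv_nonneg.mpr hp0.le)
        _ = ‖y w' - m‖ := by field_simp
    exact h1.trans (hmax w' (Finset.mem_sdiff.mp hw').1)
  have h2 : ‖y wstar - m‖ ≤ ‖y wstar - a‖ + ‖a - m‖ := norm_sub_le_norm_sub_add_norm_sub _ _ _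
  have hM : ‖y wstar - a‖ ≤
      Reg.sup' hReg (fun w => ‖y w - a‖) :=
    Finset.le_sup' (fun w => ‖y w - a‖) (Finset.mem_inter.mp hws).2
  have hupos : (0:ℝ) < 1 - 2 * (p / n) := by linarith
  have hrnpn : r / n = 1 - p / n := by linarith
  rw [le_inv_mul_iff₀ hupos]
  have h2' : ‖y wstar - m‖ ≤ ‖y wstar - a‖ + (p / n) * ‖a - b‖ := by
    rw [← hnam]; exact h2
  have hkey : (1 - p / n) * ‖a - b‖ ≤ ‖y wstar - a‖ + (p / n) * ‖a - b‖ := by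
    rw [← hrnpn, ← hnbm]; exact key.trans h2'
  have hfin : (1 - 2 * (p / n)) * ‖a - b‖ ≤ ‖y wstar - a‖ := by linarith
  exact hfin.trans hM
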